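/- Let U_k be the k-th Chebyshev polynomial of the second kind, i.e., U_k(cos θ) = sin((k+1)θ)/sin θ. For every polynomial p of degree at most k-1, ∫_{-1}^{1} p(η)·sgn(U_k(η)) dη = 0. -/

import Mathlib

open Finset Real Polynomial MeasureTheory


noncomputable def antider (p : Polynomial ℝ) : Polynomial ℝ :=
  p.sum fun i a => Polynomial.C (a / (i + 1)) * Polynomial.X ^ (i + 1)

lemma antider_deriv (p : Polynomial ℝ) : (antider p).derivative = p := by
  unfold antider
  rw [Polynomial.sum, map_sum]
  conv_rhs => rw [← Polynomial.sum_C_mul_X_pow_eq p, Polynomial.sum]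
  refine Finset.sum_congr rfl fun i hi => ?_
  rw [Polynomial.derivative_C_mul_X_pow]
  congr 1
  push_cast
  rw [div_mul_cancel₀]
  positivity

lemma antider_degree (p : Polynomial ℝ) : (antider p).degree ≤ p.degree + 1 := by
  unfold antider
  rw [Polynomial.sum]
  refine (Polynomial.degree_sum_le _ _).trans ?_
  rw [Finset.sup_le_iff]
  intro i hi
  refine (Polynomial.degree_mul_le _ _).trans ?_
  refine le_trans (add_le_add Polynomial.degree_C_le (Polynomial.degree_X_pow _).le) ?_
  rw [zero_add]
  have h1 : (i : WithBot ℕ) ≤ p.degree := Polynomial.le_degree_of_ne_zero (Polynomial.mem_support_iff.mp hi)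
  have : ((i + 1 : ℕ) : WithBot ℕ) = (i : WithBot ℕ) + 1 := by push_cast; rfl
  rw [this]
  exact add_le_add_left h1 1

lemma integral_poly (p : Polynomial ℝ) (a b : ℝ) :
    (∫ x in a..b, p.eval x : ℝ) = (antider p).eval b - (antider p).eval a := by
  refine intervalIntegral.integral_deriv_eq_sub' (fun x => (antider p).eval x) ?_ ?_ ?_
  · funext x
    rw [Polynomial.deriv, antider_deriv]
  · exact fun x _ => (antider p).differentiableAt
  · exact (Polynomial.continuous p).continuousOn

lemma T_deg : ∀ d : ℕ, (Polynomial.Chebyshev.T ℝ d).degree = d ∧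
    (Polynomial.Chebyshev.T ℝ d).coeff d = 2 ^ (d - 1) := by
  intro d
  induction d using Nat.twoStepInduction with
  | zero => simp [Polynomial.Chebyshev.T_zero]
  | one => simp [Polynomial.Chebyshev.T_one]
  | more d ih1 ih2 =>
    have hcast : ((d + 2 : ℕ) : ℤ) = (d : ℤ) + 2 := by push_cast; ring
    have hT : Polynomial.Chebyshev.T ℝ ((d + 2 : ℕ) : ℤ)
        = 2 * Polynomial.X * Polynomial.Chebyshev.T ℝ ((d + 1 : ℕ) : ℤ)
          - Polynomial.Chebyshev.T ℝ (d : ℤ) := by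
      rw [hcast]
      have := Polynomial.Chebyshev.T_add_two ℝ (d : ℤ)
      push_cast
      convert this using 3 <;> push_cast <;> ring
    obtain ⟨hdeg1, hc1⟩ := ih2
    obtain ⟨hdeg0, hc0⟩ := ih1
    have hXdeg : (2 * Polynomial.X * Polynomial.Chebyshev.T ℝ ((d + 1 : ℕ) : ℤ)).degree
        = ((d + 2 : ℕ) : WithBot ℕ) := by
      rw [Polynomial.degree_mul, Polynomial.degree_mul, hdeg1]
      rw [Polynomial.degree_X, (map_ofNat (Polynomial.C : ℝ →+* Polynomial ℝ) 2).symm,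
        Polynomial.degree_C (by norm_num)]
      push_cast
      ring
    have hlt : (Polynomial.Chebyshev.T ℝ (d : ℤ)).degree
        < (2 * Polynomial.X * Polynomial.Chebyshev.T ℝ ((d + 1 : ℕ) : ℤ)).degree := by
      rw [hXdeg, hdeg0]
      exact_mod_cast Nat.lt_add_of_pos_right (by norm_num)
    constructor
    · rw [hT, Polynomial.degree_sub_eq_left_of_degree_lt hlt, hXdeg]
    · rw [hT, Polynomial.coeff_sub]
      have h0 : (Polynomial.Chebyshev.T ℝ (d : ℤ)).coeff (d + 2) = 0 := by
        apply Polynomial.coeff_eq_zero_of_degree_lt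
        rw [hdeg0]
        exact_mod_cast Nat.lt_add_of_pos_right (by norm_num)
      have h1 : (2 * Polynomial.X * Polynomial.Chebyshev.T ℝ ((d + 1 : ℕ) : ℤ)).coeff (d + 2)
          = 2 * (Polynomial.Chebyshev.T ℝ ((d + 1 : ℕ) : ℤ)).coeff (d + 1) := by
        rw [mul_assoc, (map_ofNat (Polynomial.C : ℝ →+* Polynomial ℝ) 2).symm,
          Polynomial.coeff_C_mul, Polynomial.coeff_X_mul]
      rw [h0, h1, hc1]
      norm_num
      ring

lemma cosSum (n m : ℕ) (hn : 0 < n) (hm : m < n) :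
    ∑ j ∈ Finset.range n,
      (-1 : ℝ) ^ j * (Real.cos (m * j * π / n) - Real.cos (m * (j + 1) * π / n)) = 0 := by
  set x : ℝ := m * π / n with hx
  have hxarg : ∀ j : ℕ, (m * j * π / n : ℝ) = j * x := by
    intro j; rw [hx]; field_simp
  have hxarg' : ∀ j : ℕ, (m * (j + 1) * π / n : ℝ) = (j + 1 : ℕ) * x := by
    intro j; rw [hx]; push_cast; field_simp
  set z : ℂ := Complex.exp (x * Complex.I) with hz
  have hre : ∀ j : ℕ, Real.cos (j * x) = (z ^ j).re := by
    intro j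
    rw [hz, ← Complex.exp_nat_mul]
    rw [show (j : ℂ) * (x * Complex.I) = (((j : ℝ) * x : ℝ) : ℂ) * Complex.I by push_cast; ring]
    rw [Complex.exp_ofReal_mul_I_re]
  -- range of x
  have hx0 : 0 ≤ x := by
    rw [hx]; positivity
  have hxpi : x < π := by
    rw [hx, div_lt_iff₀ (by exact_mod_cast hn)]
    have : (m : ℝ) < n := by exact_mod_cast hm
    nlinarith [Real.pi_pos]
  have hzre : z.re = Real.cos x := Complex.exp_ofReal_mul_I_re x
  have hzne : z ≠ -1 := by
    intro h
    have : Real.cos x = -1 := by rw [← hzre, h]; simp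
    have hgt : Real.cos π < Real.cos x :=
      Real.strictAntiOn_cos ⟨hx0, hxpi.le⟩ ⟨Real.pi_pos.le, le_rfl⟩ hxpi
    rw [Real.cos_pi, this] at hgt
    exact lt_irrefl _ hgt
  have hzn : z ^ n = (-1 : ℂ) ^ m := by
    rw [hz, ← Complex.exp_nat_mul]
    have : (n : ℂ) * (x * Complex.I) = m * (π * Complex.I) := by
      rw [hx]
      have hn0 : (n : ℂ) ≠ 0 := by exact_mod_cast hn.ne'
      push_cast
      field_simp
    rw [this, Complex.exp_nat_mul, Complex.exp_mul_I]
    simp [Complex.cos_pi, Complex.sin_pi]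
  -- rewrite the real sum as the real part of a complex sum
  have hsum : ∑ j ∈ Finset.range n,
      (-1 : ℝ) ^ j * (Real.cos (m * j * π / n) - Real.cos (m * (j + 1) * π / n))
      = ((1 - z) * ∑ j ∈ Finset.range n, (-z) ^ j).re := by
    rw [Finset.mul_sum, Complex.re_sum]
    refine Finset.sum_congr rfl fun j _ => ?_
    rw [hxarg, hxarg', hre, hre]
    have : (1 - z) * (-z) ^ j = (-1) ^ j * (z ^ j - z ^ (j + 1)) := by
      rw [neg_pow]; ring
    rw [this]
    push_cast
    rw [show ((-1 : ℂ) ^ j * (z ^ j - z ^ (j + 1))).re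
        = (-1 : ℝ) ^ j * ((z ^ j).re - (z ^ (j + 1)).re) by
      induction (Nat.even_or_odd j) with
      | inl h => rw [h.neg_one_pow, h.neg_one_pow]; simp [Complex.sub_re]
      | inr h => rw [h.neg_one_pow, h.neg_one_pow]; simp [Complex.sub_re]]
  rw [hsum]
  have hgeom : ∑ j ∈ Finset.range n, (-z) ^ j = ((-z) ^ n - 1) / (-z - 1) := by
    apply geom_sum_eq
    intro h
    exact hzne (by linear_combination -h)
  rw [hgeom]
  have hzn' : (-z) ^ n = (-1 : ℂ) ^ (n + m) := by
    rw [neg_pow, hzn, ← pow_add]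
  rcases Nat.even_or_odd (n + m) with he | ho
  · rw [hzn', he.neg_one_pow]
    simp
  · rw [hzn', ho.neg_one_pow]
    have hz1 : z + 1 ≠ 0 := fun h => hzne (by linear_combination h)
    have hd1 : -z - 1 ≠ 0 := fun h => hz1 (by linear_combination -h)
    have hw2 : (1 - z) * ((-1 - 1) / (-z - 1)) = (2 - 2 * z) / (z + 1) := by
      field_simp
      ring
    rw [hw2, Complex.div_re]
    have hnormsq : Complex.normSq z = 1 := by
      rw [Complex.normSq_eq_norm_sq, hz, Complex.norm_exp_ofReal_mul_I]
      norm_num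
    rw [← add_div, _root_.div_eq_zero_iff]
    left
    rw [Complex.normSq_apply] at hnormsq
    simp only [Complex.sub_re, Complex.add_re, Complex.sub_im, Complex.add_im, Complex.mul_re,
      Complex.mul_im, Complex.one_re, Complex.one_im, Complex.re_ofNat, Complex.im_ofNat]
    nlinarith [hnormsq]

lemma keyT (n m : ℕ) (hn : 0 < n) (hm : m < n) :
    ∑ j ∈ Finset.range n, (-1 : ℝ) ^ j *
      ((Polynomial.Chebyshev.T ℝ m).eval (Real.cos (j * π / n))
        - (Polynomial.Chebyshev.T ℝ m).eval (Real.cos ((j + 1) * π / n))) = 0 := by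
  rw [← cosSum n m hn hm]
  refine Finset.sum_congr rfl fun j _ => ?_
  rw [Polynomial.Chebyshev.T_real_cos, Polynomial.Chebyshev.T_real_cos]
  congr 2 <;> push_cast <;> ring

lemma keyP (n : ℕ) (hn : 0 < n) (P : Polynomial ℝ) (hP : P.degree < n) :
    ∑ j ∈ Finset.range n, (-1 : ℝ) ^ j *
      (P.eval (Real.cos (j * π / n)) - P.eval (Real.cos ((j + 1) * π / n))) = 0 := by
  suffices H : ∀ d : ℕ, ∀ P : Polynomial ℝ, P.degree < n → P.natDegree = d →
      ∑ j ∈ Finset.range n, (-1 : ℝ) ^ j *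
        (P.eval (Real.cos (j * π / n)) - P.eval (Real.cos ((j + 1) * π / n))) = 0 by
    exact H P.natDegree P hP rfl
  intro d
  induction d using Nat.strong_induction_on with
  | _ d IH =>
  intro P hP hd
  by_cases hP0 : P = 0
  · simp [hP0]
  · set c := P.leadingCoeff with hc
    have hc0 : c ≠ 0 := Polynomial.leadingCoeff_ne_zero.mpr hP0
    obtain ⟨hTdeg, hTc⟩ := T_deg d
    set Q := P - Polynomial.C (c / 2 ^ (d - 1)) * Polynomial.Chebyshev.T ℝ d with hQdef
    have h2 : (2 : ℝ) ^ (d - 1) ≠ 0 := by positivity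
    have hcoeffP : P.coeff d = c := by rw [hc, Polynomial.leadingCoeff, hd]
    have hCTdeg : (Polynomial.C (c / 2 ^ (d - 1)) * Polynomial.Chebyshev.T ℝ d).degree
        ≤ (d : WithBot ℕ) := by
      refine (Polynomial.degree_mul_le _ _).trans ?_
      rw [hTdeg]
      refine le_trans (add_le_add_left Polynomial.degree_C_le _) ?_
      simp
    have hQco : ∀ e : ℕ, d ≤ e → Q.coeff e = 0 := by
      intro e he
      rcases eq_or_lt_of_le he with rfl | hlt
      · rw [hQdef, Polynomial.coeff_sub, Polynomial.coeff_C_mul, hTc, hcoeffP,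
          div_mul_cancel₀ _ h2, sub_self]
      · rw [hQdef, Polynomial.coeff_sub, Polynomial.coeff_eq_zero_of_degree_lt,
          Polynomial.coeff_eq_zero_of_degree_lt, sub_self]
        · exact lt_of_le_of_lt hCTdeg (by exact_mod_cast hlt)
        · rw [Polynomial.degree_eq_natDegree hP0, hd]; exact_mod_cast hlt
    have hQdeg : Q.degree < (d : WithBot ℕ) := by
      rw [show ((d : ℕ) : WithBot ℕ) = ((d : ℕ) : WithBot ℕ) from rfl,
        Polynomial.degree_lt_iff_coeff_zero]
      intro e he
      exact hQco e (by exact_mod_cast he)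
    have hdn : d < n := by
      have := Polynomial.degree_eq_natDegree hP0 ▸ hP
      rw [hd] at this
      exact_mod_cast this
    have hsplit : ∀ x : ℝ, P.eval x
        = Q.eval x + (c / 2 ^ (d - 1)) * (Polynomial.Chebyshev.T ℝ d).eval x := by
      intro x
      rw [hQdef]
      simp
    have hsum : ∑ j ∈ Finset.range n, (-1 : ℝ) ^ j *
        (P.eval (Real.cos (j * π / n)) - P.eval (Real.cos ((j + 1) * π / n)))
        = (∑ j ∈ Finset.range n, (-1 : ℝ) ^ j *
            (Q.eval (Real.cos (j * π / n)) - Q.eval (Real.cos ((j + 1) * π / n))))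
          + (c / 2 ^ (d - 1)) * ∑ j ∈ Finset.range n, (-1 : ℝ) ^ j *
            ((Polynomial.Chebyshev.T ℝ d).eval (Real.cos (j * π / n))
              - (Polynomial.Chebyshev.T ℝ d).eval (Real.cos ((j + 1) * π / n))) := by
      rw [Finset.mul_sum, ← Finset.sum_add_distrib]
      refine Finset.sum_congr rfl fun j _ => ?_
      rw [hsplit, hsplit]
      ring
    rw [hsum, keyT n d hn hdn, mul_zero, add_zero]
    by_cases hQ0 : Q = 0
    · simp [hQ0]
    · refine IH Q.natDegree ?_ Q ?_ rfl
      · exact (Polynomial.natDegree_lt_iff_degree_lt hQ0).mpr hQdeg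
      · exact hQdeg.trans (by exact_mod_cast hdn)

lemma sign_U (k : ℕ) (j : ℕ) (hj : j < k + 1) (η : ℝ)
    (hη : η ∈ Set.Ioo (Real.cos ((j + 1) * π / (k + 1))) (Real.cos (j * π / (k + 1)))) :
    Real.sign ((Polynomial.Chebyshev.U ℝ k).eval η) = (-1 : ℝ) ^ j := by
  have hn : (0 : ℝ) < (k + 1 : ℕ) := by positivity
  obtain ⟨hη1, hη2⟩ := hη
  have hjn : (j : ℝ) ≤ (k + 1 : ℕ) := by exact_mod_cast hj.le
  have hj1n : ((j : ℝ) + 1) ≤ (k + 1 : ℕ) := by exact_mod_cast hj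
  have hθj_mem : ((j : ℝ) * π / (k + 1 : ℕ)) ∈ Set.Icc (0 : ℝ) π := by
    constructor
    · positivity
    · rw [div_le_iff₀ hn]
      nlinarith [Real.pi_pos]
  have hθj1_mem : (((j : ℝ) + 1) * π / (k + 1 : ℕ)) ∈ Set.Icc (0 : ℝ) π := by
    constructor
    · positivity
    · rw [div_le_iff₀ hn]
      nlinarith [Real.pi_pos]
  have hcast : ((k : ℝ) + 1) = ((k + 1 : ℕ) : ℝ) := by push_cast; ring
  rw [hcast] at hη1 hη2
  have hm1 : -1 ≤ η := le_of_lt (lt_of_le_of_lt (Real.neg_one_le_cos _) hη1)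
  have h1 : η ≤ 1 := le_of_lt (lt_of_lt_of_le hη2 (Real.cos_le_one _))
  set θ := Real.arccos η with hθ
  have hcosθ : Real.cos θ = η := Real.cos_arccos hm1 h1
  have hθ_lt : θ < ((j : ℝ) + 1) * π / (k + 1 : ℕ) := by
    have := Real.strictAntiOn_arccos
      ⟨Real.neg_one_le_cos _, Real.cos_le_one _⟩ ⟨hm1, h1⟩ hη1
    rwa [Real.arccos_cos hθj1_mem.1 hθj1_mem.2] at this
  have hθ_gt : (j : ℝ) * π / (k + 1 : ℕ) < θ := by
    have := Real.strictAntiOn_arccos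
      ⟨hm1, h1⟩ ⟨Real.neg_one_le_cos _, Real.cos_le_one _⟩ hη2
    rwa [Real.arccos_cos hθj_mem.1 hθj_mem.2] at this
  have hs : 0 < Real.sin θ :=
    Real.sin_pos_of_pos_of_lt_pi (lt_of_le_of_lt hθj_mem.1 hθ_gt)
      (lt_of_lt_of_le hθ_lt hθj1_mem.2)
  have hU : (Polynomial.Chebyshev.U ℝ k).eval η * Real.sin θ
      = Real.sin (((k + 1 : ℕ) : ℝ) * θ) := by
    have h := Polynomial.Chebyshev.U_real_cos θ k
    rw [hcosθ] at h
    rw [← hcast]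
    exact_mod_cast h
  have hnθ1 : (j : ℝ) * π < ((k + 1 : ℕ) : ℝ) * θ := by
    rw [div_lt_iff₀ hn] at hθ_gt
    linarith
  have hnθ2 : ((k + 1 : ℕ) : ℝ) * θ < ((j : ℝ) + 1) * π := by
    rw [lt_div_iff₀ hn] at hθ_lt
    linarith
  have hsin_pos : 0 < Real.sin (((k + 1 : ℕ) : ℝ) * θ - j * π) :=
    Real.sin_pos_of_pos_of_lt_pi (by linarith) (by nlinarith)
  have hsin_eq : Real.sin (((k + 1 : ℕ) : ℝ) * θ)
      = (-1 : ℝ) ^ j * Real.sin (((k + 1 : ℕ) : ℝ) * θ - j * π) := by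
    have h := Real.sin_add_nat_mul_pi (((k + 1 : ℕ) : ℝ) * θ - j * π) j
    rw [sub_add_cancel] at h
    exact h
  have hUval : (Polynomial.Chebyshev.U ℝ k).eval η
      = (-1 : ℝ) ^ j * (Real.sin (((k + 1 : ℕ) : ℝ) * θ - j * π) / Real.sin θ) := by
    have h : (Polynomial.Chebyshev.U ℝ k).eval η
        = Real.sin (((k + 1 : ℕ) : ℝ) * θ) / Real.sin θ := by
      rw [eq_div_iff hs.ne']
      exact hU
    rw [h, hsin_eq]
    ring
  rcases Nat.even_or_odd j with he | ho
  · rw [hUval, he.neg_one_pow, one_mul, Real.sign_of_pos (div_pos hsin_pos hs)]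
  · rw [hUval, ho.neg_one_pow, neg_one_mul,
      Real.sign_of_neg (neg_neg_iff_pos.mpr (div_pos hsin_pos hs))]

theorem stmt_8 (k : ℕ) (p : Polynomial ℝ) (hp : p.degree < k) :
    ∫ η in (-1 : ℝ)..1,
        p.eval η * Real.sign ((Polynomial.Chebyshev.U ℝ k).eval η) = 0 := by
  by_cases hp0 : p = 0
  · simp [hp0]
  have hk0 : k ≠ 0 := by
    rintro rfl
    rw [Polynomial.degree_eq_natDegree hp0] at hp
    exact absurd hp (by simp)
  set f : ℝ → ℝ := fun η => p.eval η * Real.sign ((Polynomial.Chebyshev.U ℝ k).eval η)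
    with hf
  have hsign_meas : Measurable Real.sign := by
    have h : (Real.sign : ℝ → ℝ) = fun r : ℝ => if r < 0 then -1 else if 0 < r then 1 else 0 := by
      funext r; rfl
    rw [h]
    exact Measurable.ite (measurableSet_lt measurable_id measurable_const) measurable_const
      (Measurable.ite (measurableSet_lt measurable_const measurable_id) measurable_const
        measurable_const)
  have hfmeas : Measurable f := by
    exact ((Polynomial.continuous p).measurable).mul
      (hsign_meas.comp (Polynomial.continuous _).measurable)
  have habs_sign : ∀ y : ℝ, |Real.sign y| ≤ 1 := by
    intro y
    rcases Real.sign_apply_eq y with h | h | h <;> rw [h] <;> norm_num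
  have hInt : ∀ a b : ℝ, IntervalIntegrable f MeasureTheory.volume a b := by
    intro a b
    refine IntervalIntegrable.mono_fun ((Polynomial.continuous p).intervalIntegrable a b)
      hfmeas.aestronglyMeasurable ?_
    filter_upwards with x
    rw [hf]
    simp only [Real.norm_eq_abs, abs_mul]
    calc |p.eval x| * |Real.sign ((Polynomial.Chebyshev.U ℝ k).eval x)|
        ≤ |p.eval x| * 1 := by
          exact mul_le_mul_of_nonneg_left (habs_sign _) (abs_nonneg _)
      _ = |p.eval x| := mul_one _
  set b : ℕ → ℝ := fun j => Real.cos (j * π / (k + 1)) with hb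
  have hadj := intervalIntegral.sum_integral_adjacent_intervals
    (μ := MeasureTheory.volume) (f := f) (a := b) (n := k + 1) (fun j _ => hInt _ _)
  have hb0 : b 0 = 1 := by simp [hb]
  have hbn : b (k + 1) = -1 := by
    rw [hb]
    have : ((k + 1 : ℕ) : ℝ) * π / ((k : ℝ) + 1) = π := by
      push_cast
      field_simp
    simp only [this]
    exact Real.cos_pi
  have hdec : ∀ j : ℕ, j < k + 1 → b (j + 1) < b j := by
    intro j hj
    have hn : (0 : ℝ) < (k : ℝ) + 1 := by positivity
    apply Real.strictAntiOn_cos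
    · constructor
      · positivity
      · rw [div_le_iff₀ hn]
        have : (j : ℝ) ≤ k := by exact_mod_cast Nat.lt_succ_iff.mp hj
        push_cast
        nlinarith [Real.pi_pos]
    · constructor
      · positivity
      · rw [div_le_iff₀ hn]
        have : (j : ℝ) ≤ k := by exact_mod_cast Nat.lt_succ_iff.mp hj
        push_cast
        nlinarith [Real.pi_pos]
    · rw [div_lt_div_iff₀ hn hn]
      push_cast
      nlinarith [Real.pi_pos]
  have hpiece : ∀ j : ℕ, j < k + 1 → (∫ x in (b j)..(b (j + 1)), f x)
      = (-1 : ℝ) ^ j * ((antider p).eval (b (j + 1)) - (antider p).eval (b j)) := by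
    intro j hj
    have hcongr : (∫ x in (b j)..(b (j + 1)), f x)
        = ∫ x in (b j)..(b (j + 1)), ((-1 : ℝ) ^ j * p.eval x) := by
      apply intervalIntegral.integral_congr_ae
      have hnull : ∀ᵐ x : ℝ ∂MeasureTheory.volume, x ≠ b j := by
        have h0 : MeasureTheory.volume ({b j} : Set ℝ) = 0 := MeasureTheory.measure_singleton _
        filter_upwards [MeasureTheory.measure_eq_zero_iff_ae_notMem.mp h0] with x hx
        simpa using hx
      filter_upwards [hnull] with x hx hxmem
      rw [Set.uIoc_of_ge (hdec j hj).le] at hxmem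
      have hxlt : x < b j := lt_of_le_of_ne hxmem.2 hx
      have e0 : b j = Real.cos ((j : ℝ) * π / ((k : ℝ) + 1)) := rfl
      have e1 : b (j + 1) = Real.cos (((j : ℝ) + 1) * π / ((k : ℝ) + 1)) := by
        rw [hb]; push_cast; ring_nf
      have hsgn := sign_U k j hj x ⟨by rw [← e1]; exact hxmem.1, by rw [← e0]; exact hxlt⟩
      simp only [hf]
      rw [hsgn]
      ring
    rw [hcongr, intervalIntegral.integral_const_mul, integral_poly]
  have hsum_eq : ∑ j ∈ Finset.range (k + 1), (∫ x in (b j)..(b (j + 1)), f x)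
      = ∑ j ∈ Finset.range (k + 1),
          (-1 : ℝ) ^ j * ((antider p).eval (b (j + 1)) - (antider p).eval (b j)) :=
    Finset.sum_congr rfl fun j hj => hpiece j (Finset.mem_range.mp hj)
  have hints : (∫ η in (-1 : ℝ)..1, f η)
      = - ∑ j ∈ Finset.range (k + 1), (∫ x in (b j)..(b (j + 1)), f x) := by
    rw [hadj, hb0, hbn]
    rw [intervalIntegral.integral_symm]
  have hdeg : (antider p).degree < ((k + 1 : ℕ) : WithBot ℕ) := by
    refine lt_of_le_of_lt (antider_degree p) ?_
    have h1 : p.degree + 1 ≤ (k : WithBot ℕ) := by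
      rw [Polynomial.degree_eq_natDegree hp0] at hp ⊢
      have : p.natDegree < k := by exact_mod_cast hp
      exact_mod_cast this
    refine lt_of_le_of_lt h1 ?_
    exact_mod_cast Nat.lt_succ_self k
  have hkey := keyP (k + 1) (Nat.succ_pos k) (antider p) hdeg
  have hfix : ∑ j ∈ Finset.range (k + 1),
        (-1 : ℝ) ^ j * ((antider p).eval (b (j + 1)) - (antider p).eval (b j))
      = - ∑ j ∈ Finset.range (k + 1), (-1 : ℝ) ^ j *
          ((antider p).eval (Real.cos ((j : ℝ) * π / ((k + 1 : ℕ) : ℝ)))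
            - (antider p).eval (Real.cos (((j : ℝ) + 1) * π / ((k + 1 : ℕ) : ℝ)))) := by
    rw [← Finset.sum_neg_distrib]
    refine Finset.sum_congr rfl fun j _ => ?_
    have e0 : b j = Real.cos ((j : ℝ) * π / ((k + 1 : ℕ) : ℝ)) := by
      rw [hb]; push_cast; ring_nf
    have e1 : b (j + 1) = Real.cos (((j : ℝ) + 1) * π / ((k + 1 : ℕ) : ℝ)) := by
      rw [hb]; push_cast; ring_nf
    rw [e0, e1]
    ring
  show (∫ η in (-1 : ℝ)..1, f η) = 0
  rw [hints, hsum_eq, hfix, hkey]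
  norm_num
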